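/- Let Z, Z' be i.i.d. and g a real-valued measurable function of (f, Z) with 0 ≤ g(f, Z) bounded; suppose Var(g(f, Z)) ≤ 16βₙ² E[g(f, Z)] for some βₙ ≥ 1, and |g(f, Z)| ≤ 8βₙ² almost surely, where E[g(f, Z)] ≥ 0. Let G(f, Zᵢ) have mean E_{Z'}[g(f, Z')] − 2 g(f, Zᵢ). Then for i.i.d. Z₁, …, Zₙ and every t > 0, P{ (1/n) Σᵢ G(f, Zᵢ) > t } ≤ exp( − (1/(128 + 32/3)) · n t / βₙ² ). -/

import Mathlib

open MeasureTheory Real ProbabilityTheory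

lemma exp_neg_le_quadratic (y : ℝ) (hy : 0 ≤ y) : Real.exp (-y) ≤ 1 - y + y ^ 2 := by
  have h := Real.add_one_le_exp y
  have h2 : Real.exp (-y) * Real.exp y = 1 := by rw [← Real.exp_add]; simp
  have hq : (0:ℝ) ≤ 1 - y + y ^ 2 := by nlinarith [sq_nonneg (2*y - 1)]
  have h3 : 0 < Real.exp y := Real.exp_pos y
  nlinarith [mul_le_mul_of_nonneg_left h hq]


/-- Bernstein-type tail bound for the centered sums `G(f, Zᵢ) = E[g(Z')] − 2 g(Zᵢ)`:
if `Z₁, …, Zₙ` are i.i.d. with law `μ`, `g` takes values in `[0, 8βₙ²]` and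
`Var(g(Z)) ≤ 16 βₙ² E[g(Z)]`, then for every `t > 0`,
`P{(1/n) Σᵢ (E[g(Z')] − 2g(Zᵢ)) > t} ≤ exp(−(1/(128 + 32/3)) n t / βₙ²)`. -/
theorem bernstein_tail_bound {Ω E : Type*} [MeasurableSpace Ω] [MeasurableSpace E]
    (P : Measure Ω) [IsProbabilityMeasure P] (μ : Measure E) [IsProbabilityMeasure μ]
    (n : ℕ) (hn : 0 < n) (Z : Fin n → Ω → E)
    (hmeas : ∀ i, Measurable (Z i))
    (hindep : iIndepFun Z P)
    (hlaw : ∀ i, P.map (Z i) = μ)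
    (g : E → ℝ) (hg : Measurable g) (βn : ℝ) (hβn : 1 ≤ βn)
    (hg0 : ∀ e, 0 ≤ g e) (hgbd : ∀ e, g e ≤ 8 * βn ^ 2)
    (hvar : (∫ e, (g e) ^ 2 ∂μ) - (∫ e, g e ∂μ) ^ 2 ≤ 16 * βn ^ 2 * ∫ e, g e ∂μ) :
    ∀ t : ℝ, 0 < t →
      P {ω | t < (1 / n) * ∑ i, ((∫ e, g e ∂μ) - 2 * g (Z i ω))} ≤
        ENNReal.ofReal (exp (-(1 / (128 + 32 / 3)) * (n * t) / βn ^ 2)) := by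
  intro t ht
  have hβ2 : (1:ℝ) ≤ βn ^ 2 := by nlinarith
  have hβpos : (0:ℝ) < βn ^ 2 := by linarith
  set m : ℝ := ∫ e, g e ∂μ with hm
  -- integrability facts on μ
  have hgint : Integrable g μ := by
    refine Integrable.mono' (integrable_const (8 * βn ^ 2)) hg.aestronglyMeasurable ?_
    filter_upwards with e
    rw [Real.norm_eq_abs, abs_of_nonneg (hg0 e)]; exact hgbd e
  have hg2int : Integrable (fun e => g e ^ 2) μ := by
    refine Integrable.mono' (integrable_const ((8 * βn ^ 2) ^ 2)) (hg.pow_const 2).aestronglyMeasurable ?_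
    filter_upwards with e
    rw [Real.norm_eq_abs, abs_of_nonneg (sq_nonneg _)]
    exact pow_le_pow_left₀ (hg0 e) (hgbd e) 2
  have hm0 : 0 ≤ m := integral_nonneg hg0
  have hm8 : m ≤ 8 * βn ^ 2 := by
    calc m ≤ ∫ _, 8 * βn ^ 2 ∂μ := integral_mono hgint (integrable_const _) hgbd
    _ = 8 * βn ^ 2 := by simp
  have hI2 : (∫ e, g e ^ 2 ∂μ) ≤ 24 * βn ^ 2 * m := by nlinarith
  set lam : ℝ := 1 / (96 * βn ^ 2) with hlam
  have hlampos : 0 < lam := by positivity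
  have hlamβ : lam * (96 * βn ^ 2) = 1 := by
    rw [hlam, one_div_mul_cancel (by positivity)]
  set X : Fin n → Ω → ℝ := fun i ω => m - 2 * g (Z i ω) with hX
  have hφmeas : Measurable (fun e => m - 2 * g e) := measurable_const.sub (hg.const_mul 2)
  have hXmeas : ∀ i, Measurable (X i) := fun i => hφmeas.comp (hmeas i)
  have hXindep : iIndepFun X P :=
    hindep.comp (fun _ => fun e => m - 2 * g e) (fun _ => hφmeas)
  have hXle : ∀ i ω, X i ω ≤ m := fun i ω => by
    have := hg0 (Z i ω); simp only [hX]; linarith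
  -- integrability of exp (lam * X i)
  have hXint : ∀ i, Integrable (fun ω => exp (lam * X i ω)) P := by
    intro i
    refine Integrable.mono' (integrable_const (exp (lam * m)))
      (((hXmeas i).const_mul lam).exp.aestronglyMeasurable) ?_
    filter_upwards with ω
    rw [Real.norm_eq_abs, abs_of_nonneg (exp_pos _).le]
    exact exp_le_exp.mpr (mul_le_mul_of_nonneg_left (hXle i ω) hlampos.le)
  -- mgf bound for each i
  have hmgf : ∀ i, mgf (X i) P lam ≤ 1 := by
    intro i
    have h1 : mgf (X i) P lam = ∫ e, exp (lam * (m - 2 * g e)) ∂μ := by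
      rw [mgf, ← hlaw i, integral_map (hmeas i).aemeasurable
        ((hφmeas.const_mul lam).exp.aestronglyMeasurable)]
    have hpt : ∀ e, exp (lam * (m - 2 * g e)) ≤
        exp (lam * m) * (1 - 2 * lam * g e + (2 * lam * g e) ^ 2) := by
      intro e
      have hy : 0 ≤ 2 * lam * g e := mul_nonneg (by positivity) (hg0 e)
      have := exp_neg_le_quadratic (2 * lam * g e) hy
      calc exp (lam * (m - 2 * g e)) = exp (lam * m) * exp (-(2 * lam * g e)) := by
            rw [← Real.exp_add]; ring_nf
        _ ≤ exp (lam * m) * (1 - 2 * lam * g e + (2 * lam * g e) ^ 2) := by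
            exact mul_le_mul_of_nonneg_left this (exp_pos _).le
    have hRint : Integrable (fun e => exp (lam * m) * (1 - 2 * lam * g e + (2 * lam * g e) ^ 2)) μ := by
      apply Integrable.const_mul
      refine Integrable.add ?_ ?_
      · exact (integrable_const 1).sub (hgint.const_mul _)
      · have : (fun e => (2 * lam * g e) ^ 2) = fun e => (2 * lam) ^ 2 * g e ^ 2 := by
          funext e; ring
        rw [this]; exact hg2int.const_mul _
    have hLint : Integrable (fun e => exp (lam * (m - 2 * g e))) μ := by
      refine Integrable.mono' hRint ((hφmeas.const_mul lam).exp.aestronglyMeasurable) ?_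
      filter_upwards with e
      rw [Real.norm_eq_abs, abs_of_nonneg (exp_pos _).le]
      exact hpt e
    have h2 : (∫ e, exp (lam * (m - 2 * g e)) ∂μ) ≤
        exp (lam * m) * (1 - 2 * lam * m + (2 * lam) ^ 2 * ∫ e, g e ^ 2 ∂μ) := by
      calc (∫ e, exp (lam * (m - 2 * g e)) ∂μ)
          ≤ ∫ e, exp (lam * m) * (1 - 2 * lam * g e + (2 * lam * g e) ^ 2) ∂μ :=
            integral_mono hLint hRint hpt
        _ = exp (lam * m) * (1 - 2 * lam * m + (2 * lam) ^ 2 * ∫ e, g e ^ 2 ∂μ) := by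
            rw [integral_const_mul]
            congr 1
            have : (fun e => 1 - 2 * lam * g e + (2 * lam * g e) ^ 2)
                = fun e => (1 - 2 * lam * g e) + (2 * lam) ^ 2 * g e ^ 2 := by
              funext e; ring
            rw [this]
            have hf1 : Integrable (fun e => 1 - 2 * lam * g e) μ := by
              exact (integrable_const 1).sub (hgint.const_mul _)
            have hf2 : Integrable (fun e => (2 * lam) ^ 2 * g e ^ 2) μ := hg2int.const_mul _
            rw [integral_add hf1 hf2, integral_const_mul]
            have hf3 : (∫ e, (1 - 2 * lam * g e) ∂μ) = 1 - 2 * lam * m := by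
              rw [integral_sub (integrable_const 1) (hgint.const_mul _), integral_const_mul]
              simp [hm]
            rw [hf3]
    have h3 : 1 - 2 * lam * m + (2 * lam) ^ 2 * (∫ e, g e ^ 2 ∂μ) ≤ exp (-(lam * m)) := by
      have hstep : 1 - 2 * lam * m + (2 * lam) ^ 2 * (∫ e, g e ^ 2 ∂μ) ≤ 1 - lam * m := by
        have h4 : (2 * lam) ^ 2 * (∫ e, g e ^ 2 ∂μ) ≤ (2 * lam) ^ 2 * (24 * βn ^ 2 * m) :=
          mul_le_mul_of_nonneg_left hI2 (by positivity)
        have h5 : (2 * lam) ^ 2 * (24 * βn ^ 2 * m) = lam * m := by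
          have : lam = 1 / (96 * βn ^ 2) := hlam
          linear_combination (lam * m) * hlamβ
        nlinarith
      calc 1 - 2 * lam * m + (2 * lam) ^ 2 * (∫ e, g e ^ 2 ∂μ) ≤ 1 - lam * m := hstep
        _ ≤ exp (-(lam * m)) := by linarith [Real.add_one_le_exp (-(lam * m))]
    calc mgf (X i) P lam ≤ exp (lam * m) * (1 - 2 * lam * m + (2 * lam) ^ 2 * ∫ e, g e ^ 2 ∂μ) :=
          h1 ▸ h2
      _ ≤ exp (lam * m) * exp (-(lam * m)) := mul_le_mul_of_nonneg_left h3 (exp_pos _).le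
      _ = 1 := by rw [← Real.exp_add]; simp
  -- Chernoff
  set S : Ω → ℝ := fun ω => ∑ i, X i ω with hS
  have hSeq : S = ∑ i, X i := by funext ω; simp [hS, Finset.sum_apply]
  have hSmeasurable : Measurable S := by
    rw [hS]; exact Finset.measurable_sum Finset.univ (fun i _ => hXmeas i)
  have hSint : Integrable (fun ω => exp (lam * S ω)) P := by
    refine Integrable.mono' (integrable_const (exp (lam * (n * m))))
      (((hSmeasurable.const_mul lam).exp).aestronglyMeasurable) ?_
    filter_upwards with ω
    rw [Real.norm_eq_abs, abs_of_nonneg (exp_pos _).le]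
    apply exp_le_exp.mpr
    apply mul_le_mul_of_nonneg_left _ hlampos.le
    calc S ω ≤ ∑ _i : Fin n, m := Finset.sum_le_sum (fun i _ => hXle i ω)
      _ = n * m := by simp [mul_comm]
  have hch := measure_ge_le_exp_mul_mgf (μ := P) (X := S) (t := lam) (n * t) hlampos.le hSint
  have hmgfS : mgf S P lam ≤ 1 := by
    rw [hSeq, hXindep.mgf_sum hXmeas]
    exact Finset.prod_le_one (fun i _ => mgf_nonneg) (fun i _ => hmgf i)
  have hch2 : (P {ω | (n:ℝ) * t ≤ S ω}).toReal ≤ exp (-lam * (n * t)) := by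
    calc (P {ω | (n:ℝ) * t ≤ S ω}).toReal ≤ exp (-lam * (n * t)) * mgf S P lam := hch
      _ ≤ exp (-lam * (n * t)) * 1 := mul_le_mul_of_nonneg_left hmgfS (exp_pos _).le
      _ = exp (-lam * (n * t)) := mul_one _
  -- event inclusion
  have hsub : {ω | t < (1 / n : ℝ) * ∑ i, (m - 2 * g (Z i ω))} ⊆ {ω | (n:ℝ) * t ≤ S ω} := by
    intro ω hω
    simp only [Set.mem_setOf_eq] at hω ⊢
    have hnpos : (0:ℝ) < n := Nat.cast_pos.mpr hn
    have : (n:ℝ) * t < (n:ℝ) * ((1/n : ℝ) * ∑ i, (m - 2 * g (Z i ω))) :=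
      mul_lt_mul_of_pos_left hω hnpos
    have heq : (n:ℝ) * ((1/n:ℝ) * ∑ i, (m - 2 * g (Z i ω))) = S ω := by
      rw [hS]
      field_simp
      rfl
    rw [heq] at this
    linarith
  -- final exponent comparison
  have hexp : exp (-lam * (n * t)) ≤ exp (-(1 / (128 + 32 / 3)) * (n * t) / βn ^ 2) := by
    apply exp_le_exp.mpr
    have hnt : (0:ℝ) < (n:ℝ) * t := by positivity
    have hb0 : βn ^ 2 ≠ 0 := ne_of_gt hβpos
    have heqd : -(1 / (128 + 32 / 3)) * ((n:ℝ) * t) / βn ^ 2 - (-lam * ((n:ℝ) * t))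
        = ((n:ℝ) * t) / βn ^ 2 * (1 / 96 - 3 / 416) := by
      rw [hlam]
      field_simp
      ring
    have hpos : 0 ≤ ((n:ℝ) * t) / βn ^ 2 * (1 / 96 - 3 / 416) := by positivity
    linarith [heqd ▸ hpos]
  calc P {ω | t < (1 / n : ℝ) * ∑ i, (m - 2 * g (Z i ω))}
      ≤ P {ω | (n:ℝ) * t ≤ S ω} := measure_mono hsub
    _ = ENNReal.ofReal ((P {ω | (n:ℝ) * t ≤ S ω}).toReal) :=
        (ENNReal.ofReal_toReal (measure_ne_top _ _)).symm
    _ ≤ ENNReal.ofReal (exp (-lam * (n * t))) := ENNReal.ofReal_le_ofReal hch2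
    _ ≤ ENNReal.ofReal (exp (-(1 / (128 + 32 / 3)) * (n * t) / βn ^ 2)) :=
        ENNReal.ofReal_le_ofReal hexp
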